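/- Suppose g, g′ : (ℕ+ →₀ ℕ) → ℚ both satisfy: for every finitely supported m : ℕ+ →₀ ℕ with m ≠ 0, C_m = Σ_{n ≥ 1 with m(n) ≥ 1} g(m − e_n), and likewise C_m = Σ_{n ≥ 1 with m(n) ≥ 1} g′(m − e_n). Then g = g′. (That is, the Geode coefficients are uniquely determined by the factorisation S = 1 + (t_1 + t_2 + ⋯)·G.) -/
import Mathlib


/-- The hyper-Catalan number
`C_m = (Σ n·m n)! / ((1 + Σ (n−1)·m n)! · Π (m n)!)`. -/
def hyperCatalan (m : ℕ+ →₀ ℕ) : ℕ :=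
  (m.sum fun n k => (n : ℕ) * k).factorial /
    ((1 + m.sum fun n k => ((n : ℕ) - 1) * k).factorial * m.prod fun _ k => k.factorial)

/-- The weight of a multiset of natural numbers. -/
def geodeWt (m : ℕ+ →₀ ℕ) : ℕ := m.sum fun n k => (n : ℕ) * k

lemma geodeWt_add (a b : ℕ+ →₀ ℕ) : geodeWt (a + b) = geodeWt a + geodeWt b :=
  Finsupp.sum_add_index' (by simp) (by intro n k l; ring)

lemma geodeWt_single (n : ℕ+) (k : ℕ) : geodeWt (Finsupp.single n k) = n * k :=
  Finsupp.sum_single_index (by simp)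

lemma geodeWt_sub (m : ℕ+ →₀ ℕ) (n : ℕ+) (hn : n ∈ m.support) :
    geodeWt (m - Finsupp.single n 1) + (n : ℕ) = geodeWt m := by
  have hle : Finsupp.single n 1 ≤ m := by
    rw [Finsupp.single_le_iff]
    exact Nat.one_le_iff_ne_zero.2 (Finsupp.mem_support_iff.1 hn)
  have h := tsub_add_cancel_of_le hle
  calc geodeWt (m - Finsupp.single n 1) + (n : ℕ)
      = geodeWt (m - Finsupp.single n 1) + geodeWt (Finsupp.single n 1) := by
        rw [geodeWt_single]; ring
    _ = geodeWt ((m - Finsupp.single n 1) + Finsupp.single n 1) := (geodeWt_add _ _).symm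
    _ = geodeWt m := by rw [h]

/-- the Geode coefficients are uniquely determined by the factorisation
`S = 1 + (t₁ + t₂ + ⋯)·G`: any two solutions `g, g'` of the coefficient recurrence agree. -/
theorem geode_unique (g g' : (ℕ+ →₀ ℕ) → ℚ)
    (hg : ∀ m : ℕ+ →₀ ℕ, m ≠ 0 →
      (hyperCatalan m : ℚ) = ∑ n ∈ m.support, g (m - Finsupp.single n 1))
    (hg' : ∀ m : ℕ+ →₀ ℕ, m ≠ 0 →
      (hyperCatalan m : ℚ) = ∑ n ∈ m.support, g' (m - Finsupp.single n 1)) :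
    g = g' := by
  funext k
  suffices h : ∀ w : ℕ, ∀ k : ℕ+ →₀ ℕ, geodeWt k = w → g k = g' k from h (geodeWt k) k rfl
  intro w
  induction w using Nat.strong_induction_on with
  | _ w ih =>
    intro k hk
    set m : ℕ+ →₀ ℕ := k + Finsupp.single 1 1 with hmdef
    have hm1 : m 1 ≠ 0 := by simp [hmdef]
    have hmem : (1 : ℕ+) ∈ m.support := Finsupp.mem_support_iff.2 hm1
    have hm0 : m ≠ 0 := by
      intro h
      exact hm1 (by simp [h])
    have hmk : m - Finsupp.single 1 1 = k := by rw [hmdef]; exact add_tsub_cancel_right (a := k) (b := Finsupp.single 1 1)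
    have hwm : geodeWt m = w + 1 := by
      rw [hmdef, geodeWt_add, geodeWt_single, hk]; simp
    have heq : ∑ n ∈ m.support, g (m - Finsupp.single n 1)
        = ∑ n ∈ m.support, g' (m - Finsupp.single n 1) := by
      rw [← hg m hm0, ← hg' m hm0]
    rw [← Finset.add_sum_erase _ _ hmem, ← Finset.add_sum_erase _ _ hmem, hmk] at heq
    have hrest : ∑ n ∈ m.support.erase 1, g (m - Finsupp.single n 1)
        = ∑ n ∈ m.support.erase 1, g' (m - Finsupp.single n 1) := by
      refine Finset.sum_congr rfl fun n hn => ?_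
      have hn1 : n ≠ 1 := Finset.ne_of_mem_erase hn
      have hns : n ∈ m.support := Finset.mem_of_mem_erase hn
      have hwt := geodeWt_sub m n hns
      have hn2 : 2 ≤ (n : ℕ) := by
        have h1 : (1 : ℕ) < (n : ℕ) := by
          exact_mod_cast lt_of_le_of_ne n.one_le (Ne.symm hn1)
        omega
      have hlt : geodeWt (m - Finsupp.single n 1) < w := by rw [hwm] at hwt; omega
      exact ih _ hlt _ rfl
    rw [hrest] at heq
    exact add_right_cancel heq
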